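/- Blended closed loop maps are valid CLMs for bounded disturbances: Let A ∈ ℝ^{n×n}, B ∈ ℝ^{n×m}, T ≥ 1, N ≥ 1, levels 0 = η_0 ≤ η_1 ≤ … ≤ η_N, and for each i ∈ {1,…,N} matrices (R^i_1,…,R^i_T, M^i_1,…,M^i_T) satisfying the SLS feasibility conditions for (A,B) with horizon T. Define the blended maps Ψx(w)_t = Σ_{i=1}^N Σ_{k=1}^{min(t+1,T)} R^i_k (P_{η_i}(w_{t+1−k}) − P_{η_{i−1}}(w_{t+1−k})) and Ψu(w)_t analogously with M^i_k, where P_η is the saturation projection. Then for every disturbance w : ℕ → ℝⁿ with sup_t |w_t| ≤ η_N (sup vector norm), the blended maps satisfy Ψx(w)_0 = w_0 and Ψx(w)_t = A·Ψx(w)_{t−1} + B·Ψu(w)_{t−1} + w_t for all t ≥ 1. -/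
import Mathlib


/-- Scalar saturation at level `η`: `sat(a,η) = sign(a)·min(|a|,η)`. -/
noncomputable def satScalar (η a : ℝ) : ℝ := Real.sign a * min |a| η

/-- Coordinatewise saturation projection on `ℝⁿ` (sup norm). -/
noncomputable def satProj {n : ℕ} (η : ℝ) (w : Fin n → ℝ) : Fin n → ℝ :=
  fun i => satScalar η (w i)

/-- SLS feasibility conditions for `(A, B)` with horizon `T`:
`R_1 = I`, `R_{k+1} = A R_k + B M_k` for `1 ≤ k ≤ T-1`, `A R_T + B M_T = 0`. -/
def SLSFeasible {n m : ℕ} (A : Matrix (Fin n) (Fin n) ℝ) (B : Matrix (Fin n) (Fin m) ℝ)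
    (T : ℕ) (R : ℕ → Matrix (Fin n) (Fin n) ℝ) (M : ℕ → Matrix (Fin m) (Fin n) ℝ) : Prop :=
  R 1 = 1 ∧
  (∀ k : ℕ, 1 ≤ k → k + 1 ≤ T → R (k + 1) = A * R k + B * M k) ∧
  A * R T + B * M T = 0

/-- The blended FIR map
`(blend Mm η N T w)_t =
  Σ_{i=1}^N Σ_{k=1}^{min(t+1,T)} Mm^i_k (P_{η_i}(w_{t+1-k}) − P_{η_{i-1}}(w_{t+1-k}))`. -/
noncomputable def blend {p n : ℕ} (Mm : ℕ → ℕ → Matrix (Fin p) (Fin n) ℝ)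
    (η : ℕ → ℝ) (N T : ℕ) (w : ℕ → Fin n → ℝ) (t : ℕ) : Fin p → ℝ :=
  ∑ i ∈ Finset.Icc 1 N, ∑ k ∈ Finset.Icc 1 (min (t + 1) T),
    (Mm i k).mulVec (satProj (η i) (w (t + 1 - k)) - satProj (η (i - 1)) (w (t + 1 - k)))

lemma satScalar_of_abs_le {η a : ℝ} (h : |a| ≤ η) : satScalar η a = a := by
  unfold satScalar
  rw [min_eq_left h]
  rcases lt_trichotomy a 0 with h0 | h0 | h0
  · rw [Real.sign_of_neg h0, abs_of_neg h0]; ring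
  · simp [h0]
  · rw [Real.sign_of_pos h0, abs_of_pos h0, one_mul]

lemma satScalar_zero' (a : ℝ) : satScalar 0 a = 0 := by
  unfold satScalar
  rw [min_eq_right (abs_nonneg a), mul_zero]

lemma telescope {α : Type*} [AddCommGroup α] (g : ℕ → α) (N : ℕ) :
    ∑ i ∈ Finset.Icc 1 N, (g i - g (i - 1)) = g N - g 0 := by
  induction N with
  | zero => simp
  | succ N ih =>
      rw [Finset.sum_Icc_succ_top (by omega), ih]
      have : N + 1 - 1 = N := by omega
      rw [this]
      abel

lemma mulVec_sum' {p n : ℕ} (A : Matrix (Fin p) (Fin n) ℝ) {ι : Type*} (s : Finset ι)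
    (v : ι → Fin n → ℝ) : A.mulVec (∑ i ∈ s, v i) = ∑ i ∈ s, A.mulVec (v i) := by
  simp only [← Matrix.mulVecLin_apply]
  exact map_sum A.mulVecLin v s

lemma sum_Icc_shift {n : ℕ} (S : ℕ) (f : ℕ → Fin n → ℝ) :
    ∑ k ∈ Finset.Icc 2 S, f k = ∑ k ∈ Finset.Icc 1 (S - 1), f (k + 1) := by
  refine Finset.sum_nbij' (fun k => k - 1) (fun k => k + 1) ?_ ?_ ?_ ?_ ?_ <;>
      simp only [Finset.mem_Icc] <;> intro a ha
  all_goals try omega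
  have h : a - 1 + 1 = a := by omega
  rw [h]

/-- Blended closed loop maps are valid CLMs for bounded
disturbances. If each `(R^i, M^i)` satisfies the SLS feasibility conditions for
`(A, B)` with horizon `T`, and `0 = η_0 ≤ η_1 ≤ … ≤ η_N`, then for every
disturbance `w` with `sup_t ‖w_t‖ ≤ η_N` (sup vector norm) the blended maps
satisfy the linear CLM equations. -/
theorem blended_clm_valid (n m T N : ℕ) (hT : 1 ≤ T) (hN : 1 ≤ N)
    (A : Matrix (Fin n) (Fin n) ℝ) (B : Matrix (Fin n) (Fin m) ℝ)
    (η : ℕ → ℝ) (hη0 : η 0 = 0) (hmono : ∀ i : ℕ, i < N → η i ≤ η (i + 1))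
    (R : ℕ → ℕ → Matrix (Fin n) (Fin n) ℝ) (M : ℕ → ℕ → Matrix (Fin m) (Fin n) ℝ)
    (hSLS : ∀ i ∈ Finset.Icc 1 N, SLSFeasible A B T (R i) (M i))
    (w : ℕ → Fin n → ℝ) (hw : ∀ t : ℕ, ‖w t‖ ≤ η N) :
    blend R η N T w 0 = w 0 ∧
    ∀ t : ℕ, 1 ≤ t →
      blend R η N T w t =
        A.mulVec (blend R η N T w (t - 1)) + B.mulVec (blend M η N T w (t - 1)) + w t := by
  have hsat : ∀ s : ℕ, ∑ i ∈ Finset.Icc 1 N,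
      (satProj (η i) (w s) - satProj (η (i - 1)) (w s)) = w s := by
    intro s
    rw [telescope (fun i => satProj (η i) (w s)) N]
    have h1 : satProj (η N) (w s) = w s := by
      funext j
      refine satScalar_of_abs_le ?_
      have h := norm_le_pi_norm (w s) j
      rw [Real.norm_eq_abs] at h
      exact h.trans (hw s)
    have h2 : satProj (η 0) (w s) = 0 := by
      funext j; simp [satProj, hη0, satScalar_zero']
    rw [h1, h2, sub_zero]
  constructor
  · unfold blend
    have hmin : min (0 + 1) T = 1 := by omega
    rw [hmin]
    simp only [Finset.Icc_self, Finset.sum_singleton, Nat.add_sub_cancel]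
    rw [Finset.sum_congr rfl (fun i hi => by rw [(hSLS i hi).1, Matrix.one_mulVec])]
    exact hsat 0
  · intro t ht
    have ht1 : t - 1 + 1 = t := by omega
    have hblend : ∀ (p : ℕ) (Mm : ℕ → ℕ → Matrix (Fin p) (Fin n) ℝ),
        blend Mm η N T w (t - 1) =
          ∑ i ∈ Finset.Icc 1 N, ∑ k ∈ Finset.Icc 1 (min t T),
            (Mm i k).mulVec
              (satProj (η i) (w (t - k)) - satProj (η (i - 1)) (w (t - k))) := by
      intro p Mm
      unfold blend
      rw [ht1]
    have key : ∀ i ∈ Finset.Icc 1 N,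
        ∑ k ∈ Finset.Icc 1 (min (t + 1) T),
          (R i k).mulVec
            (satProj (η i) (w (t + 1 - k)) - satProj (η (i - 1)) (w (t + 1 - k)))
        = (satProj (η i) (w t) - satProj (η (i - 1)) (w t))
          + ∑ k ∈ Finset.Icc 1 (min t T),
            (A.mulVec ((R i k).mulVec
                (satProj (η i) (w (t - k)) - satProj (η (i - 1)) (w (t - k))))
             + B.mulVec ((M i k).mulVec
                (satProj (η i) (w (t - k)) - satProj (η (i - 1)) (w (t - k))))) := by
      intro i hi
      obtain ⟨hR1, hRrec, hRT⟩ := hSLS i hi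
      have hS1 : 1 ≤ min (t + 1) T := by omega
      have hins : Finset.Icc 1 (min (t + 1) T) = insert 1 (Finset.Icc 2 (min (t + 1) T)) := by
        ext k; simp only [Finset.mem_Icc, Finset.mem_insert]; omega
      rw [hins, Finset.sum_insert (by simp only [Finset.mem_Icc]; omega)]
      have h1 : (R i 1).mulVec
          (satProj (η i) (w (t + 1 - 1)) - satProj (η (i - 1)) (w (t + 1 - 1)))
          = satProj (η i) (w t) - satProj (η (i - 1)) (w t) := by
        rw [hR1, Matrix.one_mulVec]
        congr 2 <;> omega
      rw [h1]
      congr 1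
      rw [sum_Icc_shift]
      -- RHS sum: rewrite each term as (A * R i k + B * M i k).mulVec δ
      have hrhs : ∀ k ∈ Finset.Icc 1 (min t T),
          A.mulVec ((R i k).mulVec
              (satProj (η i) (w (t - k)) - satProj (η (i - 1)) (w (t - k))))
           + B.mulVec ((M i k).mulVec
              (satProj (η i) (w (t - k)) - satProj (η (i - 1)) (w (t - k))))
          = (A * R i k + B * M i k).mulVec
              (satProj (η i) (w (t - k)) - satProj (η (i - 1)) (w (t - k))) := by
        intro k hk
        rw [Matrix.add_mulVec, Matrix.mulVec_mulVec, Matrix.mulVec_mulVec]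
      rw [Finset.sum_congr rfl hrhs]
      -- LHS sum: reindexed shifted sum
      have hlhs : ∀ k ∈ Finset.Icc 1 (min (t + 1) T - 1),
          (R i (k + 1)).mulVec
            (satProj (η i) (w (t + 1 - (k + 1))) - satProj (η (i - 1)) (w (t + 1 - (k + 1))))
          = (A * R i k + B * M i k).mulVec
              (satProj (η i) (w (t - k)) - satProj (η (i - 1)) (w (t - k))) := by
        intro k hk
        simp only [Finset.mem_Icc] at hk
        have hk2 : k + 1 ≤ T :=
          le_trans (by rw [← Nat.sub_add_cancel hS1]; exact Nat.add_le_add_right hk.2 1)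
            (min_le_right _ _)
        rw [hRrec k hk.1 hk2, show t + 1 - (k + 1) = t - k from by omega]
      rw [Finset.sum_congr rfl hlhs]
      by_cases htT : t < T
      · have : min (t + 1) T - 1 = min t T := by
          rw [min_eq_left (by omega : t + 1 ≤ T), min_eq_left (by omega : t ≤ T)]
          omega
        rw [this]
      · have hmt : min t T = T := min_eq_right (by omega)
        have hm1 : min (t + 1) T - 1 = T - 1 := by
          rw [min_eq_right (by omega : T ≤ t + 1)]
        rw [hmt, hm1]
        have hsplit : Finset.Icc 1 T = insert T (Finset.Icc 1 (T - 1)) := by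
          ext k; simp only [Finset.mem_Icc, Finset.mem_insert]; omega
        rw [hsplit, Finset.sum_insert (by simp only [Finset.mem_Icc]; omega), hRT,
          Matrix.zero_mulVec, zero_add]
    -- assemble
    rw [hblend n R, hblend m M]
    unfold blend
    rw [Finset.sum_congr rfl key, Finset.sum_add_distrib, hsat t]
    simp only [mulVec_sum']
    rw [← Finset.sum_add_distrib]
    rw [add_comm]
    congr 1
    apply Finset.sum_congr rfl
    intro i _
    rw [← Finset.sum_add_distrib]
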